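/- arXiv:1807.00164 — 6 statements merged into one kernel-verified Lean document; each statement's English description precedes it below -/
import Mathlib

section
/- In a Jordan algebra over a field of characteristic not 2, for all a, b, c the normalisation equation holds: T_{a*(b*c)} = T_a T_{b*c} + T_b T_{a*c} + T_c T_{a*b} - T_b T_a T_c - T_c T_a T_b. -/
theorem stmt4 {F V : Type*} [Field F] (h2 : (2 : F) ≠ 0)
    [AddCommGroup V] [Module F V]
    (mul : V →ₗ[F] V →ₗ[F] V)
    (comm : ∀ a b : V, mul a b = mul b a)
    (jordan : ∀ a b : V, mul a (mul b (mul a a)) = mul (mul a b) (mul a a)) :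
    ∀ a b c : V, mul (mul a (mul b c)) = mul a * mul (mul b c) + mul b * mul (mul a c) + mul c * mul (mul a b) - mul b * mul a * mul c - mul c * mul a * mul b := by
  have star : ∀ a b c d : V,
      mul a (mul b (mul c d)) + mul c (mul b (mul a d)) + mul d (mul b (mul a c)) =
      mul (mul a b) (mul c d) + mul (mul c b) (mul a d) + mul (mul d b) (mul a c) := by
    intro a b c d
    have h1 := jordan (a + c + d) b
    have h2' := jordan (a + c) b
    have h3 := jordan (a + d) b
    have h4 := jordan (c + d) b
    have h5 := jordan a b
    have h6 := jordan c b
    have h7 := jordan d b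
    simp only [map_add, LinearMap.add_apply, comm c a, comm d a, comm d c] at h1 h2' h3 h4
    have key : (2:F) • (mul a (mul b (mul c d)) + mul c (mul b (mul a d)) + mul d (mul b (mul a c)))
        = (2:F) • (mul (mul a b) (mul c d) + mul (mul c b) (mul a d) + mul (mul d b) (mul a c)) := by
      linear_combination (norm := module) h1 - h2' - h3 - h4 + h5 + h6 + h7
    exact smul_right_injective V h2 key
  intro a b c
  ext x
  simp only [Module.End.mul_apply, LinearMap.add_apply, LinearMap.sub_apply]
  have hA := star x a b c
  have hB := star a x b c
  rw [comm x (mul a (mul b c)), comm x c, comm x b, comm x a, comm b a, comm c a] at hA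
  rw [comm x (mul b c), comm x (mul a c), comm x (mul a b),
      comm (mul b x) (mul a c), comm (mul c x) (mul a b)] at hB
  linear_combination (norm := module) hA - hB
end

section
/- In a Jordan algebra over a field of characteristic not 2, for all a, b: [T_{a*b}, T_{a^2}] = 2( T_a^2 [T_a, T_b] + [T_a, T_b] T_a^2 - [T_a T_{a^2}, T_b] ). -/
theorem stmt6 {F V : Type*} [Field F] (h2 : (2 : F) ≠ 0)
    [AddCommGroup V] [Module F V]
    (mul : V →ₗ[F] V →ₗ[F] V)
    (comm : ∀ a b : V, mul a b = mul b a)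
    (jordan : ∀ a b : V, mul a (mul b (mul a a)) = mul (mul a b) (mul a a)) :
    ∀ a b : V, mul (mul a b) * mul (mul a a) - mul (mul a a) * mul (mul a b) = 2 • ((mul a) ^ 2 * (mul a * mul b - mul b * mul a) + (mul a * mul b - mul b * mul a) * (mul a) ^ 2 - (mul a * mul (mul a a) * mul b - mul b * (mul a * mul (mul a a)))) := by
  -- First polarization of the Jordan identity
  have P1 : ∀ u c x : V,
      mul u (mul x (mul u c)) + mul u (mul x (mul c u)) + mul c (mul x (mul u u))
      = mul (mul u x) (mul u c) + mul (mul u x) (mul c u) + mul (mul c x) (mul u u) := by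
    intro u c x
    apply smul_right_injective V h2
    have hp := jordan (u + c) x
    have hm := jordan (u - c) x
    have hc := jordan c x
    simp only [map_add, map_sub, LinearMap.add_apply, LinearMap.sub_apply] at hp hm
    linear_combination (norm := module) hp - hm - (2:F) • hc
  -- Full linearization of the Jordan identity
  have FL : ∀ u v w y : V,
      mul u (mul y (mul v w)) + mul v (mul y (mul u w)) + mul w (mul y (mul u v))
      = mul (mul u y) (mul v w) + mul (mul v y) (mul u w) + mul (mul w y) (mul u v) := by
    intro u v w y
    apply smul_right_injective V h2
    have hp := P1 (u + v) w y
    have h1 := P1 u w y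
    have h2' := P1 v w y
    simp only [map_add, LinearMap.add_apply] at hp
    simp only [comm w u, comm w v, comm v u] at hp h1 h2' ⊢
    linear_combination (norm := module) hp - h1 - h2'
  intro a b
  -- Operator lemmas
  have hAS : mul a * mul (mul a a) = mul (mul a a) * mul a := by
    ext x
    simp only [Module.End.mul_apply]
    have h := jordan a x
    rw [comm x (mul a a), comm (mul a x) (mul a a)] at h
    exact h
  have hL1 : mul b * mul (mul a a) - mul (mul a a) * mul b
      = 2 • (mul (mul a b) * mul a) - 2 • (mul a * mul (mul a b)) := by
    ext x
    simp only [Module.End.mul_apply, LinearMap.sub_apply, LinearMap.smul_apply]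
    have h := P1 a b x
    rw [comm b a] at h
    rw [comm x (mul a b), comm (mul a x) (mul a b), comm x (mul a a),
      comm (mul b x) (mul a a)] at h
    linear_combination (norm := module) h
  have hN2 : mul (mul a (mul a b))
      = 2 • (mul (mul a b) * mul a) + mul (mul a a) * mul b
        - mul a * mul a * mul b - mul b * (mul a * mul a) := by
    ext x
    simp only [Module.End.mul_apply, LinearMap.sub_apply, LinearMap.add_apply,
      LinearMap.smul_apply]
    have h := FL x a b a
    rw [comm x (mul a (mul a b)), comm x b, comm x a, comm b a,
      comm (mul a x) (mul a b)] at h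
    linear_combination (norm := module) h
  have hPS : 2 • (mul a * mul (mul a (mul a b))) + mul (mul a b) * mul (mul a a)
      = 2 • (mul (mul a (mul a b)) * mul a) + mul (mul a a) * mul (mul a b) := by
    ext x
    simp only [Module.End.mul_apply, LinearMap.add_apply, LinearMap.smul_apply]
    have h := FL a a (mul a b) x
    rw [comm x (mul a (mul a b)), comm x (mul a a),
      comm (mul a x) (mul a (mul a b)), comm (mul (mul a b) x) (mul a a)] at h
    linear_combination (norm := module) h
  -- Assemble
  have hPS' : mul (mul a b) * mul (mul a a) - mul (mul a a) * mul (mul a b)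
      = 2 • (mul (mul a (mul a b)) * mul a) - 2 • (mul a * mul (mul a (mul a b))) := by
    rw [sub_eq_sub_iff_add_eq_add, add_comm]
    exact hPS
  have key : mul (mul a (mul a b)) * mul a - mul a * mul (mul a (mul a b))
      = (mul a) ^ 2 * (mul a * mul b - mul b * mul a)
        + (mul a * mul b - mul b * mul a) * (mul a) ^ 2
        - (mul a * mul (mul a a) * mul b - mul b * (mul a * mul (mul a a))) := by
    have h0 : mul (mul a (mul a b)) * mul a - mul a * mul (mul a (mul a b))
        - ((mul a) ^ 2 * (mul a * mul b - mul b * mul a)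
          + (mul a * mul b - mul b * mul a) * (mul a) ^ 2
          - (mul a * mul (mul a a) * mul b - mul b * (mul a * mul (mul a a))))
        = (2 • (mul (mul a b) * mul a) - 2 • (mul a * mul (mul a b))
            - (mul b * mul (mul a a) - mul (mul a a) * mul b)) * mul a
          + (mul b * (mul (mul a a) * mul a) - mul b * (mul a * mul (mul a a))) := by
      rw [hN2]
      simp only [two_smul]
      noncomm_ring
    have h1 : (2 • (mul (mul a b) * mul a) - 2 • (mul a * mul (mul a b))
            - (mul b * mul (mul a a) - mul (mul a a) * mul b)) * mul a
          + (mul b * (mul (mul a a) * mul a) - mul b * (mul a * mul (mul a a))) = 0 := by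
      rw [hL1, hAS]
      simp
    rw [← sub_eq_zero, h0, h1]
  rw [hPS', ← smul_sub, key]
end

section
/- In a Jordan algebra over a field of characteristic not 2, for all a, b: [T_{a^2}, T_{b^2}] = 2[T_a, T_{b^2 * a}]. -/
theorem stmt9 {F V : Type*} [Field F] (h2 : (2 : F) ≠ 0)
    [AddCommGroup V] [Module F V]
    (mul : V →ₗ[F] V →ₗ[F] V)
    (comm : ∀ a b : V, mul a b = mul b a)
    (jordan : ∀ a b : V, mul a (mul b (mul a a)) = mul (mul a b) (mul a a)) :
    ∀ a b : V, mul (mul a a) * mul (mul b b) - mul (mul b b) * mul (mul a a) = 2 • (mul a * mul (mul (mul b b) a) - mul (mul (mul b b) a) * mul a) := by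
  -- `key x` : the multiplication operators by `x` and `x*x` commute
  have key : ∀ x : V, mul x * mul (mul x x) = mul (mul x x) * mul x := by
    intro x
    ext y
    simp only [Module.End.mul_apply]
    rw [comm (mul x x) y, jordan, comm]
  -- expansion of mul ((x+y)*(x+y))
  have sq : ∀ x y : V, mul (mul (x + y) (x + y))
      = mul (mul x x) + (mul (mul x y) + mul (mul x y)) + mul (mul y y) := by
    intro x y
    have hx : mul (x + y) (x + y) = mul x x + (mul x y + mul x y) + mul y y := by
      simp only [map_add, LinearMap.add_apply, comm y x]
      abel
    rw [hx]
    simp only [map_add]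
  -- first polarization of `key`
  have E : ∀ x y : V,
      (mul x * mul (mul x y) + mul x * mul (mul x y)) + mul x * mul (mul y y)
        + mul y * mul (mul x x) + (mul y * mul (mul x y) + mul y * mul (mul x y))
      = (mul (mul x y) * mul x + mul (mul x y) * mul x) + mul (mul y y) * mul x
        + mul (mul x x) * mul y + (mul (mul x y) * mul y + mul (mul x y) * mul y) := by
    intro x y
    have h := key (x + y)
    rw [sq x y, map_add] at h
    have hx := key x
    have hy := key y
    linear_combination (norm := noncomm_ring) h - hx - hy
  -- second polarization
  have T : ∀ x z y : V,
      mul x * mul (mul z y) + mul z * mul (mul x y) + mul y * mul (mul x z)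
      = mul (mul z y) * mul x + mul (mul x y) * mul z + mul (mul x z) * mul y := by
    intro x z y
    have h := E (x + z) y
    have hx := E x y
    have hz := E z y
    have e2 : mul (mul (x + z) y) = mul (mul x y) + mul (mul z y) := by
      rw [map_add, LinearMap.add_apply, map_add]
    rw [e2, sq x z, map_add] at h
    refine smul_right_injective (Module.End F V) h2 ?_
    simp only [two_smul]
    linear_combination (norm := noncomm_ring) h - hx - hz
  intro a b
  have h := T a a (mul b b)
  rw [comm a (mul b b)] at h
  rw [two_smul]
  linear_combination (norm := noncomm_ring) -h
end

section
/- In a Jordan algebra over a field of characteristic not 2, the quadratic representation satisfies Q_{a^2} = Q_a^2 for every a. -/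
theorem stmt10 {F V : Type*} [Field F] (h2 : (2 : F) ≠ 0)
    [AddCommGroup V] [Module F V]
    (mul : V →ₗ[F] V →ₗ[F] V)
    (comm : ∀ a b : V, mul a b = mul b a)
    (jordan : ∀ a b : V, mul a (mul b (mul a a)) = mul (mul a b) (mul a a))
    (Q : V → Module.End F V)
    (hQ : ∀ a : V, Q a = 2 • (mul a * mul a) - mul (mul a a)) :
    ∀ a : V, Q (mul a a) = (Q a) ^ 2 := by
  intro a
  -- linearized Jordan identity
  have L : ∀ c b : V, mul c (mul b (mul a a)) + (2:F) • mul a (mul b (mul a c)) =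
      mul (mul c b) (mul a a) + (2:F) • mul (mul a b) (mul a c) := by
    intro c b
    have h1 := jordan (a + c) b
    have h2' := jordan (a - c) b
    have h3 := jordan c b
    simp only [map_add, map_sub, LinearMap.add_apply, LinearMap.sub_apply] at h1 h2'
    have hc1 := congrArg (fun x => mul a (mul b x)) (comm c a)
    have hc2 := congrArg (fun x => mul (mul a b) x) (comm c a)
    apply smul_right_injective V h2
    linear_combination (norm := module) h1 - h2' - (2:F) • h3 - (2:F) • hc1 + (2:F) • hc2
  -- T_a commutes with T_{a²}
  have comm' : ∀ x : V, mul a (mul (mul a a) x) = mul (mul a a) (mul a x) := by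
    intro x
    have h := jordan a x
    rwa [comm x (mul a a), comm (mul a x) (mul a a)] at h
  -- operator formula for T_{a³}
  have hA : ∀ c : V, mul (mul a (mul a a)) c =
      (3:F) • mul (mul a a) (mul a c) - (2:F) • mul a (mul a (mul a c)) := by
    intro c
    have h := L c a
    rw [comm (mul c a) (mul a a), comm c a, comm c (mul a (mul a a))] at h
    linear_combination (norm := module) h
  -- operator formula for T_{a⁴} at b
  have hB : ∀ b : V, mul (mul (mul a a) (mul a a)) b =
      mul (mul a a) (mul (mul a a) b) + (4:F) • mul (mul a a) (mul a (mul a b))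
        - (4:F) • mul a (mul a (mul a (mul a b))) := by
    intro b
    have h := L b (mul a a)
    rw [comm b (mul (mul a a) (mul a a)), comm (mul b (mul a a)) (mul a a),
      comm b (mul a a), hA (mul a b), comm' (mul a b)] at h
    linear_combination (norm := module) h
  rw [hQ, hQ]
  ext b
  simp only [pow_two, LinearMap.sub_apply, LinearMap.smul_apply, Module.End.mul_apply, map_sub, map_nsmul]
  rw [hB b, comm' b, comm' (mul a b)]
  module
end

section
/- In a Jordan algebra over a field of characteristic not 2, the quadratic representation satisfies Q_{a^3} = Q_a^3 for every a, where a^3 := a*(a*a). -/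
theorem stmt11 {F V : Type*} [Field F] (h2 : (2 : F) ≠ 0)
    [AddCommGroup V] [Module F V]
    (mul : V →ₗ[F] V →ₗ[F] V)
    (comm : ∀ a b : V, mul a b = mul b a)
    (jordan : ∀ a b : V, mul a (mul b (mul a a)) = mul (mul a b) (mul a a))
    (Q : V → Module.End F V)
    (hQ : ∀ a : V, Q a = 2 • (mul a * mul a) - mul (mul a a)) :
    ∀ a : V, Q (mul a (mul a a)) = (Q a) ^ 3 := by
  -- linearized Jordan identity
  have lin : ∀ a x b : V, mul a (mul b (mul x x)) + (2:F) • mul x (mul b (mul a x)) =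
      mul (mul a b) (mul x x) + (2:F) • mul (mul x b) (mul a x) := by
    intro a x b
    have ha1 := jordan (a+x) b
    have ha2 := jordan (a-x) b
    have ha3 := jordan a b
    simp only [map_add, map_sub, LinearMap.add_apply, LinearMap.sub_apply] at ha1 ha2
    rw [comm x a] at ha1 ha2
    refine smul_right_injective V h2 ?_
    linear_combination (norm := module) ha1 + ha2 - (2:F) • ha3
  have hST : ∀ a : V, mul (mul a a) * mul a = mul a * mul (mul a a) := by
    intro a
    ext b
    simp only [Module.End.mul_apply]
    rw [comm (mul a a) (mul a b), ← jordan a b, comm b (mul a a)]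
  have hA : ∀ a : V, mul (mul a (mul a a)) + (2:F) • (mul a * (mul a * mul a)) =
      (3:F) • (mul (mul a a) * mul a) := by
    intro a
    ext c
    simp only [LinearMap.add_apply, LinearMap.smul_apply, Module.End.mul_apply]
    have h := lin c a a
    rw [comm c (mul a (mul a a)), comm c a, comm (mul a c) (mul a a)] at h
    linear_combination (norm := module) h
  have hD : ∀ a : V, mul (mul (mul a a) (mul a a)) +
      (2:F) • (mul a * (mul (mul a a) * mul a)) =
      mul (mul a a) * mul (mul a a) + (2:F) • (mul (mul a (mul a a)) * mul a) := by
    intro a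
    ext c
    simp only [LinearMap.add_apply, LinearMap.smul_apply, Module.End.mul_apply]
    have h := lin c a (mul a a)
    rw [comm c (mul (mul a a) (mul a a)), comm c a, comm c (mul a a),
      comm (mul (mul a a) c) (mul a a)] at h
    linear_combination (norm := module) h
  intro a
  -- operator commutation of T with T_{a^3}
  have E3 : mul (mul a (mul a a)) =
      (3:F) • (mul (mul a a) * mul a) - (2:F) • (mul a * (mul a * mul a)) :=
    eq_sub_of_add_eq (hA a)
  have hTA3 : mul a * mul (mul a (mul a a)) = mul (mul a (mul a a)) * mul a := by
    rw [E3]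
    simp only [mul_sub, sub_mul, mul_smul_comm, smul_mul_assoc, mul_assoc]
    rw [show mul a * (mul (mul a a) * mul a) = mul (mul a a) * (mul a * mul a) by
      rw [← mul_assoc, ← hST a, mul_assoc]]
  -- power associativity: a^3 ∘ a^3 = a^2 ∘ (a^2 ∘ a^2)
  have e2 : mul (mul a (mul a a)) (mul a (mul a a)) =
      mul (mul a a) (mul (mul a a) (mul a a)) := by
    have h5 := congrArg (fun f : Module.End F V => f (mul a a)) hTA3
    simp only [Module.End.mul_apply] at h5
    rw [← h5, comm (mul a (mul a a)) (mul a a)]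
    have h6 := congrArg (fun f : Module.End F V => f (mul a (mul a a))) (hST a)
    simp only [Module.End.mul_apply] at h6
    rw [← h6, jordan a a]
  rw [hQ, hQ, e2]
  have E4 : mul (mul (mul a a) (mul a a)) =
      (mul (mul a a) * mul (mul a a) + (2:F) • (mul (mul a (mul a a)) * mul a)) -
        (2:F) • (mul a * (mul (mul a a) * mul a)) :=
    eq_sub_of_add_eq (hD a)
  have E6 : mul (mul (mul a a) (mul (mul a a) (mul a a))) =
      (3:F) • (mul (mul (mul a a) (mul a a)) * mul (mul a a)) -
        (2:F) • (mul (mul a a) * (mul (mul a a) * mul (mul a a))) :=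
    eq_sub_of_add_eq (hA (mul a a))
  rw [E6, E4, E3]
  have hc := hST a
  have hc' : ∀ x : Module.End F V, mul (mul a a) * (mul a * x) = mul a * (mul (mul a a) * x) :=
    fun x => by rw [← mul_assoc, hc, mul_assoc]
  simp only [pow_succ, pow_zero, one_mul]
  simp only [mul_sub, sub_mul, mul_add, add_mul, smul_mul_assoc, mul_smul_comm, smul_sub,
    smul_add, smul_smul, mul_assoc]
  simp only [hc, hc']
  module
end

section
/- In a Jordan algebra over a field of characteristic not 2, for all a, b the linearised quadratic identity holds: 4 Q_{a,b}^2 = 4 Q_{a*b} + 2 Q_{a^2, b^2} - Q_a Q_b - Q_b Q_a, where Q_{a,b} := T_a T_b + T_b T_a - T_{a*b} is the triple-product operator and Q_c := 2 T_c^2 - T_{c^2}. -/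
set_option maxHeartbeats 2000000 in
theorem stmt12 {F V : Type*} [Field F] (h2 : (2 : F) ≠ 0)
    [AddCommGroup V] [Module F V]
    (mul : V →ₗ[F] V →ₗ[F] V)
    (comm : ∀ a b : V, mul a b = mul b a)
    (jordan : ∀ a b : V, mul a (mul b (mul a a)) = mul (mul a b) (mul a a))
    (Q : V → Module.End F V)
    (hQ : ∀ a : V, Q a = 2 • (mul a * mul a) - mul (mul a a))
    (Q2 : V → V → Module.End F V)
    (hQ2 : ∀ a b : V, Q2 a b = mul a * mul b + mul b * mul a - mul (mul a b)) :
    ∀ a b : V, 4 • (Q2 a b) ^ 2 = 4 • Q (mul a b) + 2 • Q2 (mul a a) (mul b b) - Q a * Q b - Q b * Q a := by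
  have lin : ∀ u v w y : V,
      mul u (mul y (mul v w)) + mul v (mul y (mul u w)) + mul w (mul y (mul u v)) =
      mul (mul u v) (mul w y) + mul (mul u w) (mul v y) + mul (mul u y) (mul v w) := by
    intro u v w y
    apply smul_right_injective V h2
    have j1 := jordan (u + v + w) y
    have j2 := jordan (u + v) y
    have j3 := jordan (u + w) y
    have j4 := jordan (v + w) y
    have j5 := jordan u y
    have j6 := jordan v y
    have j7 := jordan w y
    simp only [map_add, LinearMap.add_apply,
      comm v u, comm w u, comm w v, comm y u, comm y v, comm y w, comm (mul u y) (mul u u), comm (mul u y) (mul u v), comm (mul u y) (mul u w), comm (mul v y) (mul u u), comm (mul v y) (mul u v), comm (mul v y) (mul u w), comm (mul v y) (mul v v), comm (mul v y) (mul v w), comm (mul w y) (mul u u), comm (mul w y) (mul u v), comm (mul w y) (mul u w), comm (mul w y) (mul v v), comm (mul w y) (mul v w), comm (mul w y) (mul w w)] at j1 j2 j3 j4 j5 j6 j7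
    linear_combination (norm := module) j1 - j2 - j3 - j4 + j5 + j6 + j7
  intro a b
  apply smul_right_injective (Module.End F V) h2
  ext x
  have h1 := lin a a b (mul b x)
  have h2 := lin a a x (mul b b)
  have h3 := lin a a (mul b x) b
  have h4 := lin a b b (mul a x)
  have h5 := lin a b x (mul a b)
  have h6 := lin a b (mul a x) b
  have h7 := lin a b (mul b x) a
  have h8 := lin a x (mul a b) b
  have h9 := lin a x (mul b b) a
  have h10 := lin b b x (mul a a)
  have h11 := lin b b (mul a x) a
  have h12 := lin b x (mul a a) b
  have h13 := lin b x (mul a b) a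
  have h14 := congrArg (fun z => mul x z) (lin a a b b)
  have h15 := congrArg (fun z => mul x z) (lin a b b a)
  simp only [map_add] at h14 h15
  simp only [hQ, hQ2, pow_two, LinearMap.smul_apply, LinearMap.sub_apply, map_add, map_sub, map_nsmul,
    LinearMap.add_apply, Module.End.mul_apply,
    comm b a, comm x a, comm x b, comm (mul a a) b, comm (mul a a) x, comm (mul a b) a, comm (mul a b) b, comm (mul a b) x, comm (mul a x) a, comm (mul a x) b, comm (mul a x) (mul a b), comm (mul a (mul a b)) b, comm (mul a (mul a b)) x, comm (mul a (mul a x)) b, comm (mul a (mul a (mul b b))) x, comm (mul a (mul a (mul b x))) b, comm (mul a (mul b b)) a, comm (mul a (mul b b)) x, comm (mul a (mul b b)) (mul a x), comm (mul a (mul b x)) a, comm (mul a (mul b x)) b, comm (mul a (mul b x)) (mul a b), comm (mul a (mul b (mul a b))) x, comm (mul a (mul b (mul a x))) b, comm (mul a (mul b (mul b x))) a, comm (mul a (mul x (mul a b))) b, comm (mul a (mul x (mul b b))) a, comm (mul b b) a, comm (mul b b) x, comm (mul b b) (mul a a), comm (mul b b) (mul a x), comm (mul b b) (mul a (mul a x)),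 comm (mul b x) a, comm (mul b x) b, comm (mul b x) (mul a a), comm (mul b x) (mul a b), comm (mul b x) (mul a (mul a b)), comm (mul b (mul a a)) b, comm (mul b (mul a a)) x, comm (mul b (mul a a)) (mul b x), comm (mul b (mul a b)) a, comm (mul b (mul a b)) x, comm (mul b (mul a b)) (mul a x), comm (mul b (mul a x)) a, comm (mul b (mul a x)) b, comm (mul b (mul a x)) (mul a b), comm (mul b (mul a (mul a b))) x, comm (mul b (mul a (mul a x))) b, comm (mul b (mul a (mul b x))) a, comm (mul b (mul b x)) a, comm (mul b (mul b x)) (mul a a), comm (mul b (mul b (mul a a))) x, comm (mul b (mul b (mul a x))) a, comm (mul b (mul x (mul a a))) b, comm (mul b (mul x (mul a b))) a, comm (mul x (mul a a)) b, comm (mul x (mul a a)) (mul b b), comm (mul x (mul a b)) a, comm (mul x (mul a b)) b, comm (mul x (mul a b)) (mul a b), comm (mul x (mul a (mul a b))) b, comm (mul x (mul a (mul b b))) a, comm (mul x (mul b b)) a, comm (mul x (mul b b)) (mul a a), comm (mul x (mul b (mul a a))) b, comm (mul x (mul b (mul a b))) a, comm (mul (mul a a) (mul b b)) x, comm (mul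 (mul a a) (mul b x)) b, comm (mul (mul a b) (mul a b)) x, comm (mul (mul a b) (mul a x)) b, comm (mul (mul a b) (mul b x)) a, comm (mul (mul a x) (mul b b)) a] at h1 h2 h3 h4 h5 h6 h7 h8
  simp only [hQ, hQ2, pow_two, LinearMap.smul_apply, LinearMap.sub_apply, map_add, map_sub, map_nsmul,
    LinearMap.add_apply, Module.End.mul_apply,
    comm b a, comm x a, comm x b, comm (mul a a) b, comm (mul a a) x, comm (mul a b) a, comm (mul a b) b, comm (mul a b) x, comm (mul a x) a, comm (mul a x) b, comm (mul a x) (mul a b), comm (mul a (mul a b)) b, comm (mul a (mul a b)) x, comm (mul a (mul a x)) b, comm (mul a (mul a (mul b b))) x, comm (mul a (mul a (mul b x))) b, comm (mul a (mul b b)) a, comm (mul a (mul b b)) x, comm (mul a (mul b b)) (mul a x), comm (mul a (mul b x)) a, comm (mul a (mul b x)) b, comm (mul a (mul b x)) (mul a b), comm (mul a (mul b (mul a b))) x, comm (mul a (mul b (mul a x))) b, comm (mul a (mul b (mul b x))) a, comm (mul a (mul x (mul a b))) b, comm (mul a (mul x (mul b b))) a, comm (mul b b) a, comm (mul b b) x,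 comm (mul b b) (mul a a), comm (mul b b) (mul a x), comm (mul b b) (mul a (mul a x)), comm (mul b x) a, comm (mul b x) b, comm (mul b x) (mul a a), comm (mul b x) (mul a b), comm (mul b x) (mul a (mul a b)), comm (mul b (mul a a)) b, comm (mul b (mul a a)) x, comm (mul b (mul a a)) (mul b x), comm (mul b (mul a b)) a, comm (mul b (mul a b)) x, comm (mul b (mul a b)) (mul a x), comm (mul b (mul a x)) a, comm (mul b (mul a x)) b, comm (mul b (mul a x)) (mul a b), comm (mul b (mul a (mul a b))) x, comm (mul b (mul a (mul a x))) b, comm (mul b (mul a (mul b x))) a, comm (mul b (mul b x)) a, comm (mul b (mul b x)) (mul a a), comm (mul b (mul b (mul a a))) x, comm (mul b (mul b (mul a x))) a, comm (mul b (mul x (mul a a))) b, comm (mul b (mul x (mul a b))) a, comm (mul x (mul a a)) b, comm (mul x (mul a a)) (mul b b), comm (mul x (mul a b)) a, comm (mul x (mul a b)) b, comm (mul x (mul a b)) (mul a b), comm (mul x (mul a (mul a b))) b, comm (mul x (mul a (mul b b))) a, comm (mul x (mul b b)) a, comm (mul x (mul b b)) (mul a a), comm (mul x (mul b (mul a a)))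 b, comm (mul x (mul b (mul a b))) a, comm (mul (mul a a) (mul b b)) x, comm (mul (mul a a) (mul b x)) b, comm (mul (mul a b) (mul a b)) x, comm (mul (mul a b) (mul a x)) b, comm (mul (mul a b) (mul b x)) a, comm (mul (mul a x) (mul b b)) a] at h9 h10 h11 h12 h13 h14 h15 ⊢
  linear_combination (norm := module) (-12 : F) • h1 + (6 : F) • h2 + (4 : F) • h3 + (-12 : F) • h4 + (24 : F) • h5 + (8 : F) • h6 + (8 : F) • h7 + (-8 : F) • h8 + (-4 : F) • h9 + (6 : F) • h10 + (4 : F) • h11 + (-4 : F) • h12 + (-8 : F) • h13 + (4 : F) • h14 + (4 : F) • h15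
end
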